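/- Let r ≥ 1 and m, n ≥ 2 be integers, let α ∈ (ℂˣ)^m and β ∈ (ℂˣ)^n, and consider the mn-tuple γ of all products α_i β_j. Suppose that: (i) the number of distinct values attained by |γ_k| is at most r + 1; (ii) the minimum multiplicity among these values is exactly 1 (some value of |γ_k| is attained exactly once); and (iii) at most one of these values has multiplicity greater than r. Then m ≤ r² + 1 and n ≤ r² + 1; in particular mn ≤ (r² + 1)². -/

import Mathlib

open scoped Classical

lemma aux_one_side (r : ℕ) {m n : ℕ} (hr : 1 ≤ r) (hn : 2 ≤ n)
    (a : Fin m → ℝ) (b : Fin n → ℝ) (ha : ∀ i, 0 < a i) (hb : ∀ j, 0 < b j)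
    (h1 : (Finset.univ.image fun p : Fin m × Fin n => a p.1 * b p.2).card ≤ r + 1)
    (h2 : ∃ p0 : Fin m × Fin n, ∀ p : Fin m × Fin n,
        a p.1 * b p.2 = a p0.1 * b p0.2 → p = p0)
    (h3 : ((Finset.univ.image fun p : Fin m × Fin n => a p.1 * b p.2).filter
        fun v => r < (Finset.univ.filter fun p : Fin m × Fin n =>
          a p.1 * b p.2 = v).card).card ≤ 1) :
    m ≤ r ^ 2 + 1 := by
  obtain ⟨p0, hp0⟩ := h2
  set i0 := p0.1
  set j0 := p0.2
  -- uniqueness of the β-modulus b j0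
  have hbj : ∀ j, b j = b j0 → j = j0 := by
    intro j hj
    have := hp0 (i0, j) (by simp [hj])
    exact congrArg Prod.snd this
  -- uniqueness of the α-modulus a i0
  have hai : ∀ i, a i = a i0 → i = i0 := by
    intro i hi
    have := hp0 (i, j0) (by simp [hi])
    exact congrArg Prod.fst this
  -- every α-class has multiplicity ≤ r
  have key : ∀ i, (Finset.univ.filter fun i' => a i' = a i).card ≤ r := by
    intro i
    by_contra hcon
    push_neg at hcon
    obtain ⟨j1, hj1⟩ := Fintype.exists_ne_of_one_lt_card (by rw [Fintype.card_fin]; omega) j0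
    have hbne : b j1 ≠ b j0 := fun h => hj1 (hbj _ h)
    have hmult : ∀ j : Fin n, r <
        (Finset.univ.filter fun p : Fin m × Fin n => a p.1 * b p.2 = a i * b j).card := by
      intro j
      refine lt_of_lt_of_le hcon ?_
      apply Finset.card_le_card_of_injOn (fun i' => (i', j))
      · intro i' hi'
        simp only [Finset.mem_coe, Finset.mem_filter, Finset.mem_univ, true_and] at hi' ⊢
        rw [hi']
      · intro x _ y _ h
        exact congrArg Prod.fst h
    have hmem : ∀ j : Fin n, a i * b j ∈
        ((Finset.univ.image fun p : Fin m × Fin n => a p.1 * b p.2).filter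
          fun v => r < (Finset.univ.filter fun p : Fin m × Fin n =>
            a p.1 * b p.2 = v).card) := by
      intro j
      refine Finset.mem_filter.mpr ⟨Finset.mem_image.mpr ⟨(i, j), Finset.mem_univ _, rfl⟩, hmult j⟩
    have hne : a i * b j0 ≠ a i * b j1 := by
      intro h
      exact hbne ((mul_right_injective₀ (ne_of_gt (ha i)) h).symm)
    have : 1 < ((Finset.univ.image fun p : Fin m × Fin n => a p.1 * b p.2).filter
          fun v => r < (Finset.univ.filter fun p : Fin m × Fin n =>
            a p.1 * b p.2 = v).card).card :=
      Finset.one_lt_card.mpr ⟨_, hmem j0, _, hmem j1, hne⟩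
    omega
  -- the α-class of i0 has multiplicity 1
  have h10 : (Finset.univ.filter fun i' => a i' = a i0).card = 1 := by
    rw [Finset.card_eq_one]
    refine ⟨i0, ?_⟩
    ext i
    simp only [Finset.mem_filter, Finset.mem_univ, true_and, Finset.mem_singleton]
    exact ⟨fun h => hai i h, fun h => by rw [h]⟩
  -- number of distinct α-moduli is ≤ r + 1
  set S := (Finset.univ.image a) with hS
  have hScard : S.card ≤ r + 1 := by
    refine le_trans ?_ h1
    apply Finset.card_le_card_of_injOn (fun x => x * b j0)
    · intro x hx
      obtain ⟨i, _, rfl⟩ := Finset.mem_image.mp hx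
      exact Finset.mem_image.mpr ⟨(i, j0), Finset.mem_univ _, rfl⟩
    · intro x _ y _ h
      exact mul_left_injective₀ (ne_of_gt (hb j0)) h
  -- sum fiberwise
  have hmcard : m = ∑ x ∈ S, (Finset.univ.filter fun i => a i = x).card := by
    have := Finset.card_eq_sum_card_image a (Finset.univ : Finset (Fin m))
    simpa using this
  have hai0S : a i0 ∈ S := Finset.mem_image.mpr ⟨i0, Finset.mem_univ _, rfl⟩
  rw [hmcard, ← Finset.add_sum_erase S _ hai0S, h10]
  have hsum : ∑ x ∈ S.erase (a i0), (Finset.univ.filter fun i => a i = x).card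
      ≤ (S.erase (a i0)).card * r := by
    apply Finset.sum_le_card_nsmul
    intro x hx
    obtain ⟨i, _, rfl⟩ := Finset.mem_image.mp (Finset.mem_of_mem_erase hx)
    exact key i
  have hec : (S.erase (a i0)).card ≤ r := by
    have := Finset.card_erase_of_mem hai0S
    omega
  have : (S.erase (a i0)).card * r ≤ r * r := Nat.mul_le_mul_right r hec
  nlinarith [hsum]

/-- tensor-indecomposability criterion.  Let `γ` be the `mn`-tuple
of products `α_i β_j` (`m, n ≥ 2`, entries nonzero).  If the moduli `|γ_k|`
attain at most `r + 1` distinct values, some value is attained exactly once,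
and at most one value has multiplicity `> r`, then `m ≤ r²+1`, `n ≤ r²+1`, and
`mn ≤ (r²+1)²`. -/
theorem stmt_8 (r m n : ℕ) (hr : 1 ≤ r) (hm : 2 ≤ m) (hn : 2 ≤ n)
    (α : Fin m → ℂ) (β : Fin n → ℂ)
    (hα : ∀ i, α i ≠ 0) (hβ : ∀ j, β j ≠ 0)
    (h1 : (Finset.univ.image fun p : Fin m × Fin n =>
        ‖α p.1 * β p.2‖).card ≤ r + 1)
    (h2 : ∃ v ∈ Finset.univ.image fun p : Fin m × Fin n => ‖α p.1 * β p.2‖,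
      (Finset.univ.filter fun p : Fin m × Fin n => ‖α p.1 * β p.2‖ = v).card = 1)
    (h3 : ((Finset.univ.image fun p : Fin m × Fin n => ‖α p.1 * β p.2‖).filter
        fun v => r < (Finset.univ.filter fun p : Fin m × Fin n =>
          ‖α p.1 * β p.2‖ = v).card).card ≤ 1) :
    m ≤ r ^ 2 + 1 ∧ n ≤ r ^ 2 + 1 ∧ m * n ≤ (r ^ 2 + 1) ^ 2 := by
  set a : Fin m → ℝ := fun i => ‖α i‖ with ha_def
  set b : Fin n → ℝ := fun j => ‖β j‖ with hb_def
  have ha : ∀ i, 0 < a i := fun i => norm_pos_iff.mpr (hα i)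
  have hb : ∀ j, 0 < b j := fun j => norm_pos_iff.mpr (hβ j)
  have habs : ∀ p : Fin m × Fin n, ‖α p.1 * β p.2‖ = a p.1 * b p.2 :=
    fun p => norm_mul _ _
  simp only [habs] at h1 h2 h3
  -- extract the unique pair
  obtain ⟨v, hvmem, hvcard⟩ := h2
  obtain ⟨q, hq⟩ := Finset.card_eq_one.mp hvcard
  obtain ⟨p1, _, hp1⟩ := Finset.mem_image.mp hvmem
  have hp1q : p1 ∈ Finset.univ.filter fun p : Fin m × Fin n => a p.1 * b p.2 = v := by
    simp [hp1]
  have hqv : a q.1 * b q.2 = v := by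
    have : q ∈ Finset.univ.filter fun p : Fin m × Fin n => a p.1 * b p.2 = v := by
      rw [hq]; exact Finset.mem_singleton_self q
    simpa using this
  have huniq : ∀ p : Fin m × Fin n, a p.1 * b p.2 = a q.1 * b q.2 → p = q := by
    intro p hp
    have : p ∈ Finset.univ.filter fun p : Fin m × Fin n => a p.1 * b p.2 = v := by
      simp [hp, hqv]
    rw [hq] at this
    exact Finset.mem_singleton.mp this
  have hM : m ≤ r ^ 2 + 1 :=
    aux_one_side r hr hn a b ha hb h1 ⟨q, huniq⟩ h3
  -- swapped versions
  have himg : (Finset.univ.image fun p : Fin n × Fin m => b p.1 * a p.2)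
      = (Finset.univ.image fun p : Fin m × Fin n => a p.1 * b p.2) := by
    ext x
    simp only [Finset.mem_image, Finset.mem_univ, true_and]
    constructor
    · rintro ⟨p, rfl⟩; exact ⟨(p.2, p.1), mul_comm _ _⟩
    · rintro ⟨p, rfl⟩; exact ⟨(p.2, p.1), mul_comm _ _⟩
  have hfil : ∀ x : ℝ, (Finset.univ.filter fun p : Fin n × Fin m => b p.1 * a p.2 = x).card
      = (Finset.univ.filter fun p : Fin m × Fin n => a p.1 * b p.2 = x).card := by
    intro x
    apply Finset.card_bij' (fun p _ => Prod.swap p) (fun p _ => Prod.swap p)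
    · intro p hp
      simp only [Finset.mem_filter, Finset.mem_univ, true_and] at hp ⊢
      rw [← hp]; exact mul_comm _ _
    · intro p hp
      simp only [Finset.mem_filter, Finset.mem_univ, true_and] at hp ⊢
      rw [← hp]; exact mul_comm _ _
    · intro p _; rfl
    · intro p _; rfl
  have h1' : (Finset.univ.image fun p : Fin n × Fin m => b p.1 * a p.2).card ≤ r + 1 := by
    rw [himg]; exact h1
  have h3' : ((Finset.univ.image fun p : Fin n × Fin m => b p.1 * a p.2).filter
      fun v => r < (Finset.univ.filter fun p : Fin n × Fin m =>
        b p.1 * a p.2 = v).card).card ≤ 1 := by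
    rw [himg]
    calc ((Finset.univ.image fun p : Fin m × Fin n => a p.1 * b p.2).filter
        fun v => r < (Finset.univ.filter fun p : Fin n × Fin m =>
          b p.1 * a p.2 = v).card).card
        = ((Finset.univ.image fun p : Fin m × Fin n => a p.1 * b p.2).filter
        fun v => r < (Finset.univ.filter fun p : Fin m × Fin n =>
          a p.1 * b p.2 = v).card).card := by
          congr 1
          apply Finset.filter_congr
          intro x _
          rw [hfil x]
      _ ≤ 1 := h3
  have huniq' : ∀ p : Fin n × Fin m, b p.1 * a p.2 = b q.2 * a q.1 → p = (q.2, q.1) := by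
    intro p hp
    have := huniq (p.2, p.1) (by rw [mul_comm] at hp; simpa [mul_comm] using hp)
    have h1 : p.2 = q.1 := congrArg Prod.fst this
    have h2 : p.1 = q.2 := congrArg Prod.snd this
    exact Prod.ext h2 h1
  have hN : n ≤ r ^ 2 + 1 :=
    aux_one_side r hr hm b a hb ha h1' ⟨(q.2, q.1), huniq'⟩ h3'
  refine ⟨hM, hN, ?_⟩
  have := Nat.mul_le_mul hM hN
  rw [sq]
  exact this
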